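/- Let θ > 0, p > −1 and η₂ ∈ (0, ∞]. Then lim_{t→∞} t^{(p+1)/(2θ)} ∫₀^{η₂} (1+r^{2θ})^{−t} r^{p} dr = (1/(2θ)) · Γ((p+1)/(2θ)), where Γ is the Gamma function. -/

import Mathlib

open MeasureTheory Filter Set Real

private lemma aux_mono {x t₀ t : ℝ} (hx : 0 ≤ x) (ht₀ : 0 < t₀) (ht : t₀ ≤ t) :
    (1 + x / t) ^ (-t) ≤ (1 + x / t₀) ^ (-t₀) := by
  have ht' : 0 < t := ht₀.trans_le ht
  have h1 : (0:ℝ) < 1 + x / t := by positivity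
  have h0 : (0:ℝ) < 1 + x / t₀ := by positivity
  have hber : 1 + x / t₀ ≤ (1 + x / t) ^ (t / t₀) := by
    have h := one_add_mul_self_le_rpow_one_add (s := x / t) (le_trans (by norm_num) (by positivity : (0:ℝ) ≤ x / t))
      (p := t / t₀) ((one_le_div ht₀).2 ht)
    calc 1 + x / t₀ = 1 + (t / t₀) * (x / t) := by field_simp
    _ ≤ (1 + x / t) ^ (t / t₀) := h
  have key : (1 + x / t₀) ^ t₀ ≤ (1 + x / t) ^ t := by
    calc (1 + x / t₀) ^ t₀ ≤ ((1 + x / t) ^ (t / t₀)) ^ t₀ :=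
          Real.rpow_le_rpow h0.le hber ht₀.le
    _ = (1 + x / t) ^ t := by
          rw [← Real.rpow_mul h1.le, div_mul_cancel₀ _ ht₀.ne']
  rw [Real.rpow_neg h1.le, Real.rpow_neg h0.le]
  exact inv_anti₀ (Real.rpow_pos_of_pos h0 _) key


private lemma phi_contOn {θ t : ℝ} (hθ : 0 < θ) (ht : 0 < t) (p : ℝ) :
    ContinuousOn (fun s : ℝ => (1 + s ^ (2 * θ) / t) ^ (-t) * s ^ p) (Ioi 0) := by
  apply ContinuousOn.mul
  · apply ContinuousOn.rpow_const
    · exact (continuous_const.add ((Real.continuous_rpow_const (by linarith)).div_const t)).continuousOn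
    · intro s hs
      left
      have h0 : (0:ℝ) ≤ s ^ (2 * θ) / t := by
        have := Real.rpow_nonneg (le_of_lt hs) (2 * θ)
        positivity
      intro hcon; linarith [hcon]
  · exact continuousOn_id.rpow_const fun s hs => Or.inl (ne_of_gt hs)

private lemma g_integrable {θ p t₀ : ℝ} (hθ : 0 < θ) (hp : -1 < p) (ht₀ : 0 < t₀)
    (ht₀p : p - 2 * θ * t₀ < -1) :
    IntegrableOn (fun s : ℝ => (1 + s ^ (2 * θ) / t₀) ^ (-t₀) * s ^ p) (Ioi 0) := by
  have hmg := phi_contOn hθ ht₀ p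
  have hsplit : (Ioi (0:ℝ)) = Ioc 0 1 ∪ Ioi 1 := (Set.Ioc_union_Ioi_eq_Ioi (by norm_num)).symm
  rw [hsplit]
  apply IntegrableOn.union
  · -- on Ioc 0 1, bound by s ^ p
    have base : IntegrableOn (fun s : ℝ => s ^ p) (Ioc 0 1) := by
      have h := intervalIntegral.intervalIntegrable_rpow' (a := 0) (b := 1) hp
      rwa [intervalIntegrable_iff_integrableOn_Ioc_of_le (by norm_num)] at h
    apply Integrable.mono' base ((hmg.mono Set.Ioc_subset_Ioi_self).aestronglyMeasurable measurableSet_Ioc)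
    filter_upwards [ae_restrict_mem measurableSet_Ioc] with s hs
    have hs0 : (0:ℝ) < s := hs.1
    have hx : (0:ℝ) ≤ s ^ (2 * θ) := Real.rpow_nonneg hs0.le _
    have hb : (1:ℝ) ≤ 1 + s ^ (2 * θ) / t₀ := by
      have : (0:ℝ) ≤ s ^ (2 * θ) / t₀ := by positivity
      linarith
    have h1 : (1 + s ^ (2 * θ) / t₀) ^ (-t₀) ≤ 1 :=
      Real.rpow_le_one_of_one_le_of_nonpos hb (by linarith)
    have h2 : (0:ℝ) ≤ (1 + s ^ (2 * θ) / t₀) ^ (-t₀) :=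
      Real.rpow_nonneg (by linarith) _
    rw [Real.norm_eq_abs, abs_of_nonneg (mul_nonneg h2 (Real.rpow_nonneg hs0.le _))]
    calc (1 + s ^ (2 * θ) / t₀) ^ (-t₀) * s ^ p ≤ 1 * s ^ p :=
          mul_le_mul_of_nonneg_right h1 (Real.rpow_nonneg hs0.le _)
    _ = s ^ p := one_mul _
  · -- on Ioi 1, bound by t₀ ^ t₀ * s ^ (p - 2 θ t₀)
    have base : IntegrableOn (fun s : ℝ => t₀ ^ t₀ * s ^ (p - 2 * θ * t₀)) (Ioi 1) :=
      (integrableOn_Ioi_rpow_of_lt ht₀p one_pos).const_mul _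
    apply Integrable.mono' base ((hmg.mono (Set.Ioi_subset_Ioi (by norm_num))).aestronglyMeasurable measurableSet_Ioi)
    filter_upwards [ae_restrict_mem measurableSet_Ioi] with s hs
    have hs0 : (0:ℝ) < s := lt_trans one_pos hs
    have hx : (0:ℝ) < s ^ (2 * θ) := Real.rpow_pos_of_pos hs0 _
    have h2 : (0:ℝ) ≤ (1 + s ^ (2 * θ) / t₀) ^ (-t₀) :=
      Real.rpow_nonneg (by positivity) _
    rw [Real.norm_eq_abs, abs_of_nonneg (mul_nonneg h2 (Real.rpow_nonneg hs0.le _))]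
    have hstep : (1 + s ^ (2 * θ) / t₀) ^ (-t₀) ≤ (s ^ (2 * θ) / t₀) ^ (-t₀) := by
      apply Real.rpow_le_rpow_of_nonpos (by positivity) (by linarith) (by linarith)
    have heq : (s ^ (2 * θ) / t₀) ^ (-t₀) = t₀ ^ t₀ * s ^ (-(2 * θ * t₀)) := by
      rw [Real.rpow_neg (by positivity), Real.div_rpow hx.le ht₀.le,
        ← Real.rpow_mul hs0.le, inv_div, div_eq_mul_inv, Real.rpow_neg hs0.le]
    calc (1 + s ^ (2 * θ) / t₀) ^ (-t₀) * s ^ p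
        ≤ (s ^ (2 * θ) / t₀) ^ (-t₀) * s ^ p :=
          mul_le_mul_of_nonneg_right hstep (Real.rpow_nonneg hs0.le _)
    _ = t₀ ^ t₀ * s ^ (p - 2 * θ * t₀) := by
          rw [heq, mul_assoc, ← Real.rpow_add hs0]
          ring_nf


private lemma key_limit (θ p : ℝ) (hθ : 0 < θ) (hp : -1 < p)
    (A : ℝ → Set ℝ) (hAm : ∀ t, MeasurableSet (A t))
    (hA : ∀ s : ℝ, 0 < s → ∀ᶠ t in atTop, s ∈ A t) :
    Tendsto (fun t : ℝ => ∫ s in Ioi (0:ℝ),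
        (A t).indicator (fun s => (1 + s ^ (2 * θ) / t) ^ (-t) * s ^ p) s)
      atTop (nhds ((1 / (2 * θ)) * Real.Gamma ((p + 1) / (2 * θ)))) := by
  have h2θ : 0 < 2 * θ := by linarith
  set t₀ : ℝ := max 1 ((p + 2) / (2 * θ)) with ht₀def
  have ht₀ : 0 < t₀ := lt_of_lt_of_le one_pos (le_max_left _ _)
  have ht₀p : p - 2 * θ * t₀ < -1 := by
    have h := le_max_right 1 ((p + 2) / (2 * θ))
    rw [div_le_iff₀ h2θ] at h
    nlinarith
  have hgint : IntegrableOn (fun s : ℝ => (1 + s ^ (2 * θ) / t₀) ^ (-t₀) * s ^ p) (Ioi 0) :=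
    g_integrable hθ hp ht₀ ht₀p
  have hlim : Tendsto (fun t : ℝ => ∫ s in Ioi (0:ℝ),
      (A t).indicator (fun s => (1 + s ^ (2 * θ) / t) ^ (-t) * s ^ p) s)
      atTop (nhds (∫ s in Ioi (0:ℝ), Real.exp (-s ^ (2 * θ)) * s ^ p)) := by
    apply tendsto_integral_filter_of_dominated_convergence
      (fun s : ℝ => (1 + s ^ (2 * θ) / t₀) ^ (-t₀) * s ^ p)
    · -- measurability
      filter_upwards [eventually_gt_atTop (0:ℝ)] with t ht
      exact AEStronglyMeasurable.indicator
        ((phi_contOn hθ ht p).aestronglyMeasurable measurableSet_Ioi) (hAm t)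
    · -- bound
      filter_upwards [eventually_ge_atTop t₀] with t ht
      filter_upwards [ae_restrict_mem measurableSet_Ioi] with s hs
      have hs0 : (0:ℝ) < s := hs
      have hx : (0:ℝ) ≤ s ^ (2 * θ) := Real.rpow_nonneg hs0.le _
      have hgnn : (0:ℝ) ≤ (1 + s ^ (2 * θ) / t₀) ^ (-t₀) * s ^ p :=
        mul_nonneg (Real.rpow_nonneg (by positivity) _) (Real.rpow_nonneg hs0.le _)
      by_cases hsA : s ∈ A t
      · rw [Set.indicator_of_mem hsA, Real.norm_eq_abs]
        have ht' : (0:ℝ) < t := lt_of_lt_of_le ht₀ ht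
        have hnn : (0:ℝ) ≤ (1 + s ^ (2 * θ) / t) ^ (-t) * s ^ p :=
          mul_nonneg (Real.rpow_nonneg (by positivity) _) (Real.rpow_nonneg hs0.le _)
        rw [abs_of_nonneg hnn]
        exact mul_le_mul_of_nonneg_right (aux_mono hx ht₀ ht) (Real.rpow_nonneg hs0.le _)
      · rw [Set.indicator_of_notMem hsA]
        simpa using hgnn
    · exact hgint
    · -- pointwise limit
      filter_upwards [ae_restrict_mem measurableSet_Ioi] with s hs
      have hs0 : (0:ℝ) < s := hs
      have hx : (0:ℝ) ≤ s ^ (2 * θ) := Real.rpow_nonneg hs0.le _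
      have h1 : Tendsto (fun t : ℝ => ((1 + s ^ (2 * θ) / t) ^ t)⁻¹ * s ^ p) atTop
          (nhds ((Real.exp (s ^ (2 * θ)))⁻¹ * s ^ p)) :=
        (((tendsto_one_add_div_rpow_exp (s ^ (2 * θ))).inv₀ (Real.exp_ne_zero _))).mul_const _
      rw [show Real.exp (-s ^ (2 * θ)) = (Real.exp (s ^ (2 * θ)))⁻¹ by rw [Real.exp_neg]]
      apply h1.congr'
      filter_upwards [eventually_gt_atTop (0:ℝ), hA s hs0] with t ht htA
      rw [Set.indicator_of_mem htA, Real.rpow_neg (by positivity)]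
  have : (∫ s in Ioi (0:ℝ), Real.exp (-s ^ (2 * θ)) * s ^ p)
      = (1 / (2 * θ)) * Real.Gamma ((p + 1) / (2 * θ)) := by
    rw [← integral_rpow_mul_exp_neg_rpow h2θ hp]
    exact setIntegral_congr_fun measurableSet_Ioi fun s hs => mul_comm _ _
  rwa [this] at hlim


private lemma subst_eq (θ p : ℝ) (hθ : 0 < θ) (S : Set ℝ) (A : ℝ → Set ℝ)
    (hSm : MeasurableSet S) (hS : S ⊆ Ioi 0)
    {t : ℝ} (ht : 0 < t)
    (hconn : ∀ s : ℝ, 0 < s → ((t ^ (1 / (2 * θ)))⁻¹ * s ∈ S ↔ s ∈ A t)) :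
    t ^ ((p + 1) / (2 * θ)) * ∫ r in S, (1 + r ^ (2 * θ)) ^ (-t) * r ^ p
      = ∫ s in Ioi (0:ℝ), (A t).indicator
          (fun s => (1 + s ^ (2 * θ) / t) ^ (-t) * s ^ p) s := by
  have h2θ : 0 < 2 * θ := by linarith
  set c : ℝ := t ^ (1 / (2 * θ)) with hc
  have hc0 : 0 < c := Real.rpow_pos_of_pos ht _
  have hc2θ : c ^ (2 * θ) = t := by
    rw [hc, ← Real.rpow_mul ht.le, one_div, inv_mul_cancel₀ h2θ.ne', Real.rpow_one]
  set h : ℝ → ℝ := fun r => (1 + r ^ (2 * θ)) ^ (-t) * r ^ p with hh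
  have step1 : ∀ s ∈ Ioi (0:ℝ),
      (A t).indicator (fun s => (1 + s ^ (2 * θ) / t) ^ (-t) * s ^ p) s
        = c ^ p * S.indicator h (c⁻¹ * s) := by
    intro s hs
    have hs0 : (0:ℝ) < s := hs
    have hmem := hconn s hs0
    by_cases hsA : s ∈ A t
    · rw [Set.indicator_of_mem hsA, Set.indicator_of_mem (hmem.2 hsA)]
      have e1 : (c⁻¹ * s) ^ (2 * θ) = s ^ (2 * θ) / t := by
        rw [Real.mul_rpow (by positivity) hs0.le, Real.inv_rpow hc0.le, hc2θ,
          inv_mul_eq_div]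
      have e2 : (c⁻¹ * s) ^ p = (c ^ p)⁻¹ * s ^ p := by
        rw [Real.mul_rpow (by positivity) hs0.le, Real.inv_rpow hc0.le]
      rw [hh]
      simp only [e1, e2]
      have hcp : (0:ℝ) < c ^ p := Real.rpow_pos_of_pos hc0 _
      field_simp
    · rw [Set.indicator_of_notMem hsA,
        Set.indicator_of_notMem (fun hmem' => hsA (hmem.1 hmem'))]
      ring
  rw [setIntegral_congr_fun measurableSet_Ioi step1, integral_const_mul,
    integral_comp_mul_left_Ioi (S.indicator h) 0 (inv_pos.2 hc0)]
  rw [mul_zero, inv_inv, smul_eq_mul, setIntegral_indicator hSm,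
    Set.inter_eq_self_of_subset_right hS]
  have hkey : c ^ p * c = t ^ ((p + 1) / (2 * θ)) := by
    calc c ^ p * c = c ^ (p + 1) := by rw [Real.rpow_add hc0, Real.rpow_one]
    _ = t ^ ((p + 1) / (2 * θ)) := by
        rw [hc, ← Real.rpow_mul ht.le]
        congr 1
        ring
  rw [← hkey]
  ring

/-- Corollary 2.1, formula (2.5): for `θ > 0`, `p > -1` and any `0 < η₂ ≤ ∞`,
`t^{(p+1)/(2θ)} ∫₀^{η₂} (1+r^{2θ})^{-t} r^p dr → Γ((p+1)/(2θ))/(2θ)` as `t → ∞`. -/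

theorem stmt_2 (θ p : ℝ) (hθ : 0 < θ) (hp : -1 < p) (η₂ : EReal) (hη₂ : 0 < η₂) :
    Tendsto (fun t : ℝ => t ^ ((p + 1) / (2 * θ)) *
        ∫ r in {r : ℝ | 0 < r ∧ (r : EReal) < η₂}, (1 + r ^ (2 * θ)) ^ (-t) * r ^ p)
      atTop (nhds ((1 / (2 * θ)) * Real.Gamma ((p + 1) / (2 * θ)))) := by
  have h2θ : 0 < 2 * θ := by linarith
  induction η₂ using EReal.rec with
  | bot => exact absurd hη₂ (by simp)
  | coe η =>
    have hη : 0 < η := by exact_mod_cast hη₂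
    have hSeq : {r : ℝ | 0 < r ∧ (r : EReal) < (η : EReal)} = Ioo 0 η := by
      ext r; simp [EReal.coe_lt_coe_iff, Set.mem_Ioo]
    set A : ℝ → Set ℝ := fun t => Iio (t ^ (1 / (2 * θ)) * η) with hA_def
    have hAm : ∀ t, MeasurableSet (A t) := fun t => measurableSet_Iio
    have hA : ∀ s : ℝ, 0 < s → ∀ᶠ t in atTop, s ∈ A t := by
      intro s hs
      have h := (tendsto_rpow_atTop (y := 1 / (2 * θ)) (by positivity)).atTop_mul_const hη
      exact (h.eventually_gt_atTop s).mono fun t ht => ht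
    rw [hSeq]
    apply Tendsto.congr' _ (key_limit θ p hθ hp A hAm hA)
    filter_upwards [eventually_gt_atTop (0:ℝ)] with t ht
    refine (subst_eq θ p hθ (Ioo 0 η) A measurableSet_Ioo Set.Ioo_subset_Ioi_self ht ?_).symm
    intro s hs
    have hc0 : (0:ℝ) < t ^ (1 / (2 * θ)) := Real.rpow_pos_of_pos ht _
    have hpos : (0:ℝ) < (t ^ (1 / (2 * θ)))⁻¹ * s := by positivity
    simp only [hA_def, Set.mem_Ioo, Set.mem_Iio]
    rw [inv_mul_lt_iff₀ hc0]
    tauto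
  | top =>
    have hSeq : {r : ℝ | 0 < r ∧ (r : EReal) < ⊤} = Ioi 0 := by
      ext r; simp [EReal.coe_lt_top]
    rw [hSeq]
    apply Tendsto.congr' _ (key_limit θ p hθ hp (fun _ => Set.univ)
      (fun _ => MeasurableSet.univ) (fun s hs => Eventually.of_forall fun t => Set.mem_univ s))
    filter_upwards [eventually_gt_atTop (0:ℝ)] with t ht
    refine (subst_eq θ p hθ (Ioi 0) (fun _ => Set.univ) measurableSet_Ioi le_rfl ht ?_).symm
    intro s hs
    simp only [Set.mem_Ioi, Set.mem_univ, iff_true]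
    positivity
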